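/- Moment convergence for the magnetization, supercritical case: fix β > 1 and K ∈ ℕ. For each N let X_1,…,X_N be CW(β,N)-distributed and S_N = ∑_{i=1}^N X_i. Then, as N → ∞, E_{β,N}((S_N/N)^K) converges to m(β)^K if K is even and to 0 if K is odd, where m(β) > 0 is the unique positive solution of x = tanh(βx); these limits are the moments of the measure (1/2)(δ_{−m(β)} + δ_{m(β)}). -/

import Mathlib

open MeasureTheory Filter Real Topology ENNReal

/-- The spin value associated to a Boolean: `true ↦ +1`, `false ↦ -1`. -/
noncomputable def spin (b : Bool) : ℝ := if b then 1 else -1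

/-- The (unnormalized) Curie–Weiss Boltzmann weight of a configuration. -/
noncomputable def cwWeight (β : ℝ) (N : ℕ) (σ : Fin N → Bool) : ℝ :=
  Real.exp (β / (2 * N) * (∑ i, spin (σ i)) ^ 2)

/-- The Curie–Weiss partition function. -/
noncomputable def cwZ (β : ℝ) (N : ℕ) : ℝ :=
  ∑ σ : Fin N → Bool, cwWeight β N σ

/-- Expectation with respect to the Curie–Weiss distribution `CW(β,N)`. -/
noncomputable def cwExp (β : ℝ) (N : ℕ) (f : (Fin N → Bool) → ℝ) : ℝ :=
  (∑ σ : Fin N → Bool, cwWeight β N σ * f σ) / cwZ β N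

/-- Law on `ℝ` of the observable `g` under the Curie–Weiss distribution `CW(β,N)`. -/
noncomputable def cwLaw (β : ℝ) (N : ℕ) (g : (Fin N → Bool) → ℝ) : Measure ℝ :=
  ∑ σ : Fin N → Bool, ENNReal.ofReal (cwWeight β N σ / cwZ β N) • Measure.dirac (g σ)

/-- The correlation `E_{β,N}(X_1 ⋯ X_ℓ)` of the first `ℓ` spins. -/
noncomputable def cwCorr (β : ℝ) (N ℓ : ℕ) : ℝ :=
  cwExp β N (fun σ => ∏ j ∈ Finset.univ.filter (fun j : Fin N => (j : ℕ) < ℓ), spin (σ j))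

section CWaux
open Finset Set



lemma spin_sum_eq (n : ℕ) (σ : Fin n → Bool) :
    (∑ i, spin (σ i)) = 2 * ((Finset.univ.filter (fun i => σ i)).card : ℝ) - n := by
  have : ∀ i, spin (σ i) = 2 * (if σ i then (1:ℝ) else 0) - 1 := by
    intro i; cases σ i <;> simp [spin] <;> norm_num
  simp only [this, Finset.sum_sub_distrib, ← Finset.mul_sum, Finset.sum_const, Finset.sum_boole]
  simp

lemma card_fiber (n k : ℕ) :
    (Finset.univ.filter (fun σ : Fin n → Bool => (Finset.univ.filter (fun i => σ i)).card = k)).card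
      = n.choose k := by
  classical
  rw [show n.choose k = (Fintype.card (Fin n)).choose k by rw [Fintype.card_fin],
    ← Fintype.card_finset_len, Fintype.card_subtype]
  refine Finset.card_bij' (fun σ _ => Finset.univ.filter (fun i => σ i))
    (fun s _ => fun i => decide (i ∈ s)) ?_ ?_ ?_ ?_
  · intro σ hσ
    simp at hσ ⊢; exact hσ
  · intro s hs
    simp at hs ⊢
    first | exact hs | (rw [← hs]; congr 1; ext i; simp)
  · intro σ _; funext i; simp
  · intro s _; ext i; simp

lemma sum_fn (n : ℕ) (f : ℝ → ℝ) :
    ∑ σ : Fin n → Bool, f (∑ i, spin (σ i))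
      = ∑ k ∈ Finset.range (n+1), (n.choose k : ℝ) * f (2*k - n) := by
  classical
  have hmaps : ∀ σ : Fin n → Bool, σ ∈ (Finset.univ : Finset (Fin n → Bool)) →
      (Finset.univ.filter (fun i => σ i)).card ∈ Finset.range (n+1) := by
    intro σ _
    simp [Nat.lt_succ_iff]
    exact (Finset.card_filter_le _ _).trans (by simp)
  rw [← Finset.sum_fiberwise_of_maps_to hmaps (fun σ => f (∑ i, spin (σ i)))]
  refine Finset.sum_congr rfl fun k hk => ?_
  have : ∀ σ ∈ Finset.univ.filter
      (fun σ : Fin n → Bool => (Finset.univ.filter (fun i => σ i)).card = k),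
      f (∑ i, spin (σ i)) = f (2*k - n) := by
    intro σ hσ
    simp only [Finset.mem_filter] at hσ
    rw [spin_sum_eq, hσ.2]
  rw [Finset.sum_congr rfl this, Finset.sum_const, card_fiber, nsmul_eq_mul]

-- x^k = exp(k log x) when x>0 or k=0
lemma pow_eq_exp_log (x : ℝ) (k : ℕ) (h : 0 < x ∨ k = 0) : x ^ k = Real.exp (k * Real.log x) := by
  rcases h with h | h
  · rw [Real.exp_nat_mul, Real.exp_log h]
  · simp [h]

section mode
variable (n k : ℕ)

noncomputable def bpmf (n k j : ℕ) : ℝ :=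
  (n.choose j : ℝ) * ((k:ℝ)/n) ^ j * (((n:ℝ)-k)/n) ^ (n - j)

lemma bpmf_nonneg (hk : k ≤ n) (j : ℕ) : 0 ≤ bpmf n k j := by
  have h1 : (0:ℝ) ≤ (k:ℝ)/n := by positivity
  have h2 : (0:ℝ) ≤ ((n:ℝ)-k)/n := by
    apply div_nonneg _ (by positivity)
    have := (Nat.cast_le (α := ℝ)).2 hk
    linarith
  unfold bpmf; positivity

lemma bpmf_sum (hn : 0 < n) : ∑ j ∈ range (n+1), bpmf n k j = 1 := by
  have hp : (k:ℝ)/n + ((n:ℝ)-k)/n = 1 := by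
    field_simp
    ring
  calc ∑ j ∈ range (n+1), bpmf n k j
      = ∑ j ∈ range (n+1), ((k:ℝ)/n) ^ j * (((n:ℝ)-k)/n) ^ (n-j) * (n.choose j : ℝ) := by
        refine Finset.sum_congr rfl fun j _ => by unfold bpmf; ring
    _ = ((k:ℝ)/n + ((n:ℝ)-k)/n) ^ n := (add_pow _ _ n).symm
    _ = 1 := by rw [hp, one_pow]

lemma bpmf_le_one (hn : 0 < n) (hk : k ≤ n) (j : ℕ) (hj : j ≤ n) : bpmf n k j ≤ 1 := by
  rw [← bpmf_sum n k hn]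
  exact Finset.single_le_sum (fun i _ => bpmf_nonneg n k hk i) (by simp [Nat.lt_succ_iff, hj])

lemma bpmf_step_up (hk : k ≤ n) (j : ℕ) (hj : j < k) : bpmf n k j ≤ bpmf n k (j+1) := by
  have hn : 0 < n := lt_of_lt_of_le (Nat.lt_of_le_of_lt (Nat.zero_le j) hj) hk
  set p : ℝ := (k:ℝ)/n
  set q : ℝ := ((n:ℝ)-k)/n
  have hp : 0 ≤ p := by positivity
  have hq : 0 ≤ q := by
    apply div_nonneg _ (by positivity)
    have := (Nat.cast_le (α := ℝ)).2 hk; linarith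
  -- key: (j+1) * bpmf(j+1) = (n-j) * choose(n,j) * p^(j+1) * q^(n-j-1)
  have hchoose : ((j:ℝ)+1) * (n.choose (j+1) : ℝ) = (n.choose j : ℝ) * ((n:ℝ) - j) := by
    have := Nat.choose_succ_right_eq n j
    have hcast := congrArg (Nat.cast (R := ℝ)) this
    push_cast at hcast
    have hjn : (j:ℝ) ≤ (n:ℝ) := by
      exact_mod_cast Nat.le_of_lt (lt_of_lt_of_le hj hk)
    rw [Nat.cast_sub (Nat.le_of_lt (lt_of_lt_of_le hj hk))] at hcast
    linarith [hcast]
  -- the scalar inequality (j+1) q ≤ (n-j) p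
  have hscal : ((j:ℝ)+1) * q ≤ ((n:ℝ)-(j:ℝ)) * p := by
    have h1 : ((j:ℝ)+1) ≤ (k:ℝ) := by exact_mod_cast hj
    have h2 : (k:ℝ) ≤ (n:ℝ) := by exact_mod_cast hk
    have h3 : (0:ℝ) < n := by exact_mod_cast hn
    show ((j:ℝ)+1) * (((n:ℝ)-(k:ℝ))/(n:ℝ)) ≤ ((n:ℝ)-(j:ℝ)) * ((k:ℝ)/(n:ℝ))
    rw [mul_div_assoc', mul_div_assoc', div_le_div_iff₀ h3 h3]
    have hj0 : (0:ℝ) ≤ (j:ℝ) := Nat.cast_nonneg j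
    have hprod : (0:ℝ) ≤ ((k:ℝ)-(j:ℝ)-1) * n := mul_nonneg (by linarith) h3.le
    have h4 : ((j:ℝ)+1)*((n:ℝ)-(k:ℝ)) ≤ ((n:ℝ)-(j:ℝ))*(k:ℝ) := by nlinarith [hprod]
    nlinarith [mul_le_mul_of_nonneg_right h4 h3.le]
  have hnj : n - j = (n - (j+1)) + 1 := by omega
  have hpos : (0:ℝ) < (j:ℝ)+1 := by positivity
  rw [← mul_le_mul_iff_right₀ hpos]
  calc ((j:ℝ)+1) * bpmf n k j
      = ((n.choose j : ℝ) * p^j * q^(n-(j+1))) * (((j:ℝ)+1) * q) := by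
        unfold bpmf; rw [hnj]; ring
    _ ≤ ((n.choose j : ℝ) * p^j * q^(n-(j+1))) * (((n:ℝ)-(j:ℝ)) * p) := by
        apply mul_le_mul_of_nonneg_left hscal; positivity
    _ = ((j:ℝ)+1) * bpmf n k (j+1) := by
        unfold bpmf
        rw [pow_succ]
        have : ((j:ℝ)+1) * ((n.choose (j+1) : ℝ) * (p ^ j * p) * q ^ (n - (j+1)))
            = (((j:ℝ)+1) * (n.choose (j+1):ℝ)) * (p^j * p) * q^(n-(j+1)) := by ring
        rw [this, hchoose]; ring

lemma bpmf_step_down (hk : k ≤ n) (j : ℕ) (hj : k ≤ j) (hjn : j < n) :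
    bpmf n k (j+1) ≤ bpmf n k j := by
  have hn : 0 < n := by omega
  set p : ℝ := (k:ℝ)/n
  set q : ℝ := ((n:ℝ)-k)/n
  have hp : 0 ≤ p := by positivity
  have hq : 0 ≤ q := by
    apply div_nonneg _ (by positivity)
    have := (Nat.cast_le (α := ℝ)).2 hk; linarith
  have hchoose : ((j:ℝ)+1) * (n.choose (j+1) : ℝ) = (n.choose j : ℝ) * ((n:ℝ) - j) := by
    have := Nat.choose_succ_right_eq n j
    have hcast := congrArg (Nat.cast (R := ℝ)) this
    push_cast at hcast
    rw [Nat.cast_sub (Nat.le_of_lt hjn)] at hcast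
    linarith [hcast]
  have hscal : ((n:ℝ)-(j:ℝ)) * p ≤ ((j:ℝ)+1) * q := by
    have h1 : (k:ℝ) ≤ (j:ℝ) := by exact_mod_cast hj
    have h2 : (j:ℝ) < (n:ℝ) := by exact_mod_cast hjn
    have hkn : (k:ℝ) ≤ (n:ℝ) := by exact_mod_cast hk
    have h3 : (0:ℝ) < n := by exact_mod_cast hn
    show ((n:ℝ)-(j:ℝ)) * ((k:ℝ)/(n:ℝ)) ≤ ((j:ℝ)+1) * (((n:ℝ)-(k:ℝ))/(n:ℝ))
    rw [mul_div_assoc', mul_div_assoc', div_le_div_iff₀ h3 h3]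
    have hk0 : (0:ℝ) ≤ (k:ℝ) := Nat.cast_nonneg k
    have hprod : (0:ℝ) ≤ ((j:ℝ)-(k:ℝ)) * n := mul_nonneg (by linarith) h3.le
    have h4 : ((n:ℝ)-(j:ℝ))*(k:ℝ) ≤ ((j:ℝ)+1)*((n:ℝ)-(k:ℝ)) := by nlinarith [hprod]
    nlinarith [mul_le_mul_of_nonneg_right h4 h3.le]
  have hnj : n - j = (n - (j+1)) + 1 := by omega
  have hpos : (0:ℝ) < (j:ℝ)+1 := by positivity
  rw [← mul_le_mul_iff_right₀ hpos]
  calc ((j:ℝ)+1) * bpmf n k (j+1)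
      = ((n.choose j : ℝ) * p^j * q^(n-(j+1))) * (((n:ℝ)-(j:ℝ)) * p) := by
        unfold bpmf
        rw [pow_succ]
        have : ((j:ℝ)+1) * ((n.choose (j+1) : ℝ) * (p ^ j * p) * q ^ (n - (j+1)))
            = (((j:ℝ)+1) * (n.choose (j+1):ℝ)) * (p^j * p) * q^(n-(j+1)) := by ring
        rw [this, hchoose]; ring
    _ ≤ ((n.choose j : ℝ) * p^j * q^(n-(j+1))) * (((j:ℝ)+1) * q) := by
        apply mul_le_mul_of_nonneg_left hscal; positivity
    _ = ((j:ℝ)+1) * bpmf n k j := by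
        unfold bpmf; rw [hnj]; ring

lemma bpmf_le_mode (hk : k ≤ n) (j : ℕ) (hj : j ≤ n) : bpmf n k j ≤ bpmf n k k := by
  rcases le_or_gt j k with h | h
  · -- upward from j to k
    have key : ∀ d : ℕ, d ≤ k → bpmf n k (k - d) ≤ bpmf n k k := by
      intro d
      induction d with
      | zero => simp
      | succ d ih =>
        intro hd
        have h1 : bpmf n k (k - (d+1)) ≤ bpmf n k (k - (d+1) + 1) :=
          bpmf_step_up n k hk _ (by omega)
        rw [show k - (d+1) + 1 = k - d by omega] at h1
        exact h1.trans (ih (by omega))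
    have := key (k - j) (by omega)
    rwa [show k - (k - j) = j by omega] at this
  · -- downward from k to j
    have key : ∀ d : ℕ, k + d ≤ n → bpmf n k (k + d) ≤ bpmf n k k := by
      intro d
      induction d with
      | zero => simp
      | succ d ih =>
        intro hd
        have h1 : bpmf n k (k + d + 1) ≤ bpmf n k (k + d) :=
          bpmf_step_down n k hk _ (by omega) (by omega)
        have h2 : bpmf n k (k + (d+1)) ≤ bpmf n k (k + d) := by
          rw [show k + (d+1) = k + d + 1 by omega]; exact h1
        exact h2.trans (ih (by omega))
    have := key (j - k) (by omega)
    rwa [show k + (j - k) = j by omega] at this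

lemma one_le_bpmf_mode (hn : 0 < n) (hk : k ≤ n) :
    1 ≤ ((n:ℝ)+1) * bpmf n k k := by
  have hsum := bpmf_sum n k hn
  have hle : ∑ j ∈ range (n+1), bpmf n k j ≤ (range (n+1)).card • bpmf n k k :=
    Finset.sum_le_card_nsmul _ _ _ (fun j hj => bpmf_le_mode n k hk j (by
      simp [Nat.lt_succ_iff] at hj; exact hj))
  rw [hsum, Finset.card_range, nsmul_eq_mul] at hle
  push_cast at hle
  linarith
end mode

noncomputable def Ffun (β s : ℝ) : ℝ :=
  β * s^2/2 - ((1+s)/2)*Real.log ((1+s)/2) - ((1-s)/2)*Real.log ((1-s)/2)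

noncomputable def gfun (β s : ℝ) : ℝ := β * s - (1/2)*Real.log ((1+s)/(1-s))

lemma Fcont (β : ℝ) : Continuous (Ffun β) := by
  unfold Ffun
  have h1 : Continuous fun s : ℝ => ((1+s)/2)*Real.log ((1+s)/2) :=
    Real.continuous_mul_log.comp (by continuity)
  have h2 : Continuous fun s : ℝ => ((1-s)/2)*Real.log ((1-s)/2) :=
    Real.continuous_mul_log.comp (by continuity)
  continuity

lemma Feven (β s : ℝ) : Ffun β (-s) = Ffun β s := by
  unfold Ffun
  rw [show (1 + -s) = 1 - s by ring, show (1 - -s) = 1 + s by ring]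
  ring

lemma FhasDeriv (β : ℝ) {s : ℝ} (hs : s ∈ Ioo (-1:ℝ) 1) :
    HasDerivAt (Ffun β) (gfun β s) s := by
  obtain ⟨hs1, hs2⟩ := hs
  have hp : (0:ℝ) < (1+s)/2 := by linarith
  have hq : (0:ℝ) < (1-s)/2 := by linarith
  have d1 : HasDerivAt (fun s : ℝ => (1+s)/2) (1/2) s := by
    simpa using (((hasDerivAt_id s).const_add 1).div_const 2)
  have d2 : HasDerivAt (fun s : ℝ => (1-s)/2) (-(1/2)) s := by
    have : HasDerivAt (fun s : ℝ => (1-s)) (-1) s := by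
      simpa using ((hasDerivAt_id s).const_sub 1)
    have h2 := this.div_const 2
    rw [show (-(1/2):ℝ) = -1/2 by norm_num]; exact h2
  have m1 : HasDerivAt (fun s : ℝ => ((1+s)/2)*Real.log ((1+s)/2))
      ((Real.log ((1+s)/2) + 1) * (1/2)) s :=
    by have := (Real.hasDerivAt_mul_log hp.ne').comp s d1; exact this
  have m2 : HasDerivAt (fun s : ℝ => ((1-s)/2)*Real.log ((1-s)/2))
      ((Real.log ((1-s)/2) + 1) * (-(1/2))) s :=
    by have := (Real.hasDerivAt_mul_log hq.ne').comp s d2; exact this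
  have dsq : HasDerivAt (fun s : ℝ => β * s^2/2) (β * s) s := by
    have : HasDerivAt (fun s : ℝ => s^2) (2*s) s := by
      simpa using (hasDerivAt_pow 2 s)
    have := (this.const_mul β).div_const 2
    simpa using this.congr_deriv (by ring)
  have := (dsq.sub m1).sub m2
  refine this.congr_deriv ?_
  have hlog : Real.log ((1+s)/(1-s)) = Real.log ((1+s)/2) - Real.log ((1-s)/2) := by
    rw [show (1+s)/(1-s) = ((1+s)/2)/((1-s)/2) by
      field_simp
      , Real.log_div hp.ne' hq.ne']
  rw [gfun, hlog]
  ring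

lemma tanh_formula (y : ℝ) :
    Real.tanh y = (Real.exp (2*y) - 1) / (Real.exp (2*y) + 1) := by
  rw [Real.tanh_eq_sinh_div_cosh, Real.sinh_eq, Real.cosh_eq]
  have hE : 0 < Real.exp y := Real.exp_pos y
  have h2 : Real.exp (2*y) = Real.exp y * Real.exp y := by
    rw [two_mul, Real.exp_add]
  rw [h2, Real.exp_neg]
  have hden : Real.exp y + (Real.exp y)⁻¹ > 0 := by positivity
  field_simp

lemma tanh_lt_one' (y : ℝ) : Real.tanh y < 1 := by
  rw [tanh_formula]
  have h : (0:ℝ) < Real.exp (2*y) + 1 := by positivity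
  rw [div_lt_one h]; linarith

lemma neg_one_lt_tanh (y : ℝ) : -1 < Real.tanh y := by
  rw [tanh_formula]
  have h : (0:ℝ) < Real.exp (2*y) + 1 := by positivity
  rw [lt_div_iff₀ h]
  have := Real.exp_pos (2*y)
  linarith

lemma tanh_strictMono : StrictMono Real.tanh := by
  intro y1 y2 h
  rw [tanh_formula, tanh_formula]
  have h1 : (0:ℝ) < Real.exp (2*y1) + 1 := by positivity
  have h2 : (0:ℝ) < Real.exp (2*y2) + 1 := by positivity
  rw [div_lt_div_iff₀ h1 h2]
  have : Real.exp (2*y1) < Real.exp (2*y2) := Real.exp_lt_exp.2 (by linarith)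
  nlinarith

lemma tanh_eq_iff {y s : ℝ} (hs1 : -1 < s) (hs2 : s < 1) :
    Real.tanh y = s ↔ y = (1/2) * Real.log ((1+s)/(1-s)) := by
  have hnum : (0:ℝ) < 1 + s := by linarith
  have hden : (0:ℝ) < 1 - s := by linarith
  have ht : (0:ℝ) < (1+s)/(1-s) := by positivity
  constructor
  · intro h
    rw [tanh_formula] at h
    have hE : (0:ℝ) < Real.exp (2*y) + 1 := by positivity
    have h' : Real.exp (2*y) - 1 = s * (Real.exp (2*y) + 1) := by
      field_simp at h; linarith [h]
    have hexp : Real.exp (2*y) = (1+s)/(1-s) := by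
      rw [eq_div_iff hden.ne']
      nlinarith [h']
    have := congrArg Real.log hexp
    rw [Real.log_exp] at this
    linarith
  · intro h
    have hexp : Real.exp (2*y) = (1+s)/(1-s) := by
      rw [h, show 2 * ((1/2) * Real.log ((1+s)/(1-s))) = Real.log ((1+s)/(1-s)) by ring,
        Real.exp_log ht]
    rw [tanh_formula, hexp]
    rw [div_eq_iff (by positivity)]
    field_simp
    ring

section sign
variable {β m : ℝ} (hβ : 1 < β) (hm : 0 < m) (hm_fix : Real.tanh (β * m) = m)
  (hm_unique : ∀ x : ℝ, 0 < x → Real.tanh (β * x) = x → x = m)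

include hβ hm hm_fix in
lemma m_lt_one : m < 1 := by rw [← hm_fix]; exact tanh_lt_one' _

include hβ hm hm_fix in
lemma g_eq_zero_at_m : gfun β m = 0 := by
  have h1 : m < 1 := m_lt_one hβ hm hm_fix
  have := (tanh_eq_iff (by linarith) h1).1 hm_fix
  rw [gfun, ← this]; ring

include hm_unique in
lemma g_zero_only_m {s : ℝ} (hs0 : 0 < s) (hs1 : s < 1) (h : gfun β s = 0) : s = m := by
  apply hm_unique s hs0
  rw [tanh_eq_iff (by linarith) hs1]
  rw [gfun] at h; linarith

lemma g_contOn (β : ℝ) : ContinuousOn (gfun β) (Ioo (-1:ℝ) 1) := by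
  intro s hs
  obtain ⟨h1, h2⟩ := hs
  apply ContinuousAt.continuousWithinAt
  have hden : (1:ℝ) - s ≠ 0 := by linarith
  have harg : (1+s)/(1-s) ≠ 0 := by
    apply ne_of_gt; apply div_pos <;> linarith
  have hc : ContinuousAt (fun x : ℝ => (1+x)/(1-x)) s :=
    ContinuousAt.div (by fun_prop) (by fun_prop) hden
  have hlog : ContinuousAt (fun x : ℝ => Real.log ((1+x)/(1-x))) s := hc.log harg
  exact (continuousAt_const.mul continuousAt_id).sub (continuousAt_const.mul hlog)

-- auxiliary smooth version of g near 0
include hβ in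
lemma exists_pos_point (hm : 0 < m) (hm1 : m < 1) :
    ∃ s1 : ℝ, s1 ∈ Ioo (0:ℝ) m ∧ 0 < gfun β s1 := by
  set G : ℝ → ℝ := fun s => β * s - (1/2)*(Real.log (1+s) - Real.log (1-s)) with hG
  have hd : HasDerivAt G (β - 1) 0 := by
    have d1 : HasDerivAt (fun s : ℝ => Real.log (1+s)) 1 0 := by
      have hid : HasDerivAt (fun s : ℝ => 1 + s) 1 0 := by
        simpa using (hasDerivAt_id (0:ℝ)).const_add 1
      have h := (Real.hasDerivAt_log (x := (1:ℝ)+0) (by norm_num)).comp 0 hid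
      simpa [Function.comp_def] using h
    have d2 : HasDerivAt (fun s : ℝ => Real.log (1-s)) (-1) 0 := by
      have hid : HasDerivAt (fun s : ℝ => 1 - s) (-1) 0 := by
        simpa using (hasDerivAt_id (0:ℝ)).const_sub 1
      have h := (Real.hasDerivAt_log (x := (1:ℝ)-0) (by norm_num)).comp 0 hid
      simpa [Function.comp_def] using h
    have := ((hasDerivAt_id (0:ℝ)).const_mul β).sub (((d1.sub d2)).const_mul (1/2))
    exact this.congr_deriv (by ring)
  have hG0 : G 0 = 0 := by simp [hG]
  have hslope := hasDerivAt_iff_tendsto_slope.1 hd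
  have hev : ∀ᶠ s in 𝓝[>] (0:ℝ), 0 < slope G 0 s := by
    have hle : 𝓝[>] (0:ℝ) ≤ 𝓝[≠] (0:ℝ) :=
      nhdsWithin_mono 0 (fun x hx => ne_of_gt hx)
    exact (hslope.mono_left hle).eventually (eventually_gt_nhds (by linarith))
  have hev2 : ∀ᶠ s in 𝓝[>] (0:ℝ), s < m :=
    eventually_nhdsWithin_of_eventually_nhds (eventually_lt_nhds hm)
  obtain ⟨s1, hs1, hs1pos⟩ :
      ∃ s1, s1 ∈ Ioo (0:ℝ) m ∧ 0 < slope G 0 s1 := by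
    obtain ⟨s1, h1, h2, h3⟩ := (hev.and (hev2.and eventually_mem_nhdsWithin)).exists
    exact ⟨s1, ⟨h3, h2⟩, h1⟩
  refine ⟨s1, hs1, ?_⟩
  have hs1lt1 : s1 < 1 := lt_trans hs1.2 hm1
  have h1 : (0:ℝ) < 1 + s1 := by linarith [hs1.1]
  have h2 : (0:ℝ) < 1 - s1 := by linarith
  have hgeq : gfun β s1 = G s1 := by
    rw [gfun, hG, Real.log_div h1.ne' h2.ne']
  have hslope_eq : slope G 0 s1 = G s1 / s1 := by
    rw [slope_def_field, hG0, sub_zero, sub_zero]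
  rw [hslope_eq] at hs1pos
  rw [hgeq]
  rcases div_pos_iff.mp hs1pos with ⟨hg, _⟩ | ⟨_, hneg⟩
  · exact hg
  · linarith [hs1.1]
end sign

section sign2
variable {β m : ℝ} (hβ : 1 < β) (hm : 0 < m) (hm_fix : Real.tanh (β * m) = m)
  (hm_unique : ∀ x : ℝ, 0 < x → Real.tanh (β * x) = x → x = m)

include hβ hm hm_fix in
lemma exists_neg_point : ∃ s0 : ℝ, s0 ∈ Ioo m (1:ℝ) ∧ gfun β s0 < 0 := by
  have hm1 : m < 1 := m_lt_one hβ hm hm_fix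
  set y0 : ℝ := β + β * m + 1 with hy0
  set s0 : ℝ := Real.tanh y0 with hs0
  have hs0lt1 : s0 < 1 := tanh_lt_one' y0
  have hs0gtm : m < s0 := by
    rw [← hm_fix, hs0]
    exact tanh_strictMono (by nlinarith)
  refine ⟨s0, ⟨hs0gtm, hs0lt1⟩, ?_⟩
  have h0 : -1 < s0 := _root_.neg_one_lt_tanh y0
  have := (tanh_eq_iff h0 hs0lt1).1 rfl
  rw [gfun, ← this]
  have hs0pos : 0 < s0 := lt_trans hm hs0gtm
  nlinarith [hs0lt1, hβ]

lemma ivt_zero_aux {β a b : ℝ} (hab : a ≤ b) (hC : ContinuousOn (gfun β) (Icc a b))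
    (hva : gfun β a < 0) (hvb : 0 < gfun β b) : ∃ z ∈ Icc a b, gfun β z = 0 := by
  have h := intermediate_value_Icc hab hC
  have h0 : (0:ℝ) ∈ Icc (gfun β a) (gfun β b) := ⟨hva.le, hvb.le⟩
  obtain ⟨z, hz, hz0⟩ := h h0
  exact ⟨z, hz, hz0⟩

lemma ivt_zero_aux' {β a b : ℝ} (hab : a ≤ b) (hC : ContinuousOn (gfun β) (Icc a b))
    (hva : 0 < gfun β a) (hvb : gfun β b < 0) : ∃ z ∈ Icc a b, gfun β z = 0 := by
  have h := intermediate_value_Icc' hab hC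
  have h0 : (0:ℝ) ∈ Icc (gfun β b) (gfun β a) := ⟨hvb.le, hva.le⟩
  obtain ⟨z, hz, hz0⟩ := h h0
  exact ⟨z, hz, hz0⟩

include hβ hm hm_fix hm_unique in
lemma g_pos_on {s : ℝ} (hs : s ∈ Ioo (0:ℝ) m) : 0 < gfun β s := by
  have hm1 : m < 1 := m_lt_one hβ hm hm_fix
  by_contra hcon
  push_neg at hcon
  have hne : gfun β s ≠ 0 := by
    intro h
    have := g_zero_only_m hm_unique hs.1 (lt_trans hs.2 hm1) h
    exact absurd this (ne_of_lt hs.2)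
  have hlt : gfun β s < 0 := lt_of_le_of_ne hcon hne
  obtain ⟨s1, hs1, hs1pos⟩ := exists_pos_point hβ hm hm1
  have hminpos : 0 < min s s1 := lt_min hs.1 hs1.1
  have hmaxlt : max s s1 < m := max_lt hs.2 hs1.2
  have hIsub : Icc (min s s1) (max s s1) ⊆ Ioo (-1:ℝ) 1 := by
    intro x hx
    exact ⟨by linarith [hx.1], by linarith [hx.2, lt_trans hmaxlt hm1]⟩
  have hcont : ContinuousOn (gfun β) (Icc (min s s1) (max s s1)) :=
    (g_contOn β).mono hIsub
  have hz : ∃ z ∈ Icc (min s s1) (max s s1), gfun β z = 0 := by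
    rcases le_total s s1 with hss | hss
    · rw [min_eq_left hss, max_eq_right hss] at hcont ⊢
      exact ivt_zero_aux hss hcont hlt hs1pos
    · rw [min_eq_right hss, max_eq_left hss] at hcont ⊢
      exact ivt_zero_aux' hss hcont hs1pos hlt
  obtain ⟨z, hz, hz0⟩ := hz
  have hz1 : 0 < z := lt_of_lt_of_le hminpos hz.1
  have hz2 : z < m := lt_of_le_of_lt hz.2 hmaxlt
  have := g_zero_only_m hm_unique hz1 (lt_trans hz2 hm1) hz0
  linarith

include hβ hm hm_fix hm_unique in
lemma g_neg_on {s : ℝ} (hs : s ∈ Ioo m (1:ℝ)) : gfun β s < 0 := by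
  have hm1 : m < 1 := m_lt_one hβ hm hm_fix
  by_contra hcon
  push_neg at hcon
  have hne : gfun β s ≠ 0 := by
    intro h
    have := g_zero_only_m hm_unique (lt_trans hm hs.1) hs.2 h
    exact absurd this (ne_of_gt hs.1)
  have hlt : 0 < gfun β s := lt_of_le_of_ne hcon (Ne.symm hne)
  obtain ⟨s0, hs0, hs0neg⟩ := exists_neg_point hβ hm hm_fix
  have hminpos : 0 < min s s0 := lt_min (lt_trans hm hs.1) (lt_trans hm hs0.1)
  have hmingt : m < min s s0 := lt_min hs.1 hs0.1
  have hmaxlt : max s s0 < 1 := max_lt hs.2 hs0.2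
  have hIsub : Icc (min s s0) (max s s0) ⊆ Ioo (-1:ℝ) 1 := by
    intro x hx
    exact ⟨by linarith [hx.1], by linarith [hx.2]⟩
  have hcont : ContinuousOn (gfun β) (Icc (min s s0) (max s s0)) :=
    (g_contOn β).mono hIsub
  have hz : ∃ z ∈ Icc (min s s0) (max s s0), gfun β z = 0 := by
    rcases le_total s s0 with hss | hss
    · rw [min_eq_left hss, max_eq_right hss] at hcont ⊢
      exact ivt_zero_aux' hss hcont hlt hs0neg
    · rw [min_eq_right hss, max_eq_left hss] at hcont ⊢
      exact ivt_zero_aux hss hcont hs0neg hlt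
  obtain ⟨z, hz, hz0⟩ := hz
  have hz1 : m < z := lt_of_lt_of_le hmingt hz.1
  have hz2 : z < 1 := lt_of_le_of_lt hz.2 hmaxlt
  have := g_zero_only_m hm_unique (lt_trans hm hz1) hz2 hz0
  linarith
end sign2

section max
variable {β m : ℝ} (hβ : 1 < β) (hm : 0 < m) (hm_fix : Real.tanh (β * m) = m)
  (hm_unique : ∀ x : ℝ, 0 < x → Real.tanh (β * x) = x → x = m)

include hβ hm hm_fix hm_unique in
lemma F_strict_max {s : ℝ} (hs : s ∈ Icc (-1:ℝ) 1) (h1 : s ≠ m) (h2 : s ≠ -m) :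
    Ffun β s < Ffun β m := by
  have hm1 : m < 1 := m_lt_one hβ hm hm_fix
  have hmono : StrictMonoOn (Ffun β) (Icc 0 m) := by
    apply strictMonoOn_of_deriv_pos (convex_Icc 0 m) (Fcont β).continuousOn
    intro x hx
    rw [interior_Icc] at hx
    have hx' : x ∈ Ioo (-1:ℝ) 1 := ⟨by linarith [hx.1], by linarith [hx.2]⟩
    rw [(FhasDeriv β hx').deriv]
    exact g_pos_on hβ hm hm_fix hm_unique hx
  have hanti : StrictAntiOn (Ffun β) (Icc m 1) := by
    apply strictAntiOn_of_deriv_neg (convex_Icc m 1) (Fcont β).continuousOn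
    intro x hx
    rw [interior_Icc] at hx
    have hx' : x ∈ Ioo (-1:ℝ) 1 := ⟨by linarith [hx.1], by linarith [hx.2]⟩
    rw [(FhasDeriv β hx').deriv]
    exact g_neg_on hβ hm hm_fix hm_unique hx
  have key : ∀ t : ℝ, t ∈ Icc (0:ℝ) 1 → t ≠ m → Ffun β t < Ffun β m := by
    intro t ht htm
    rcases lt_or_gt_of_ne htm with h | h
    · exact hmono ⟨ht.1, h.le⟩ ⟨hm.le, le_refl m⟩ h
    · exact hanti ⟨le_refl m, hm1.le⟩ ⟨h.le, ht.2⟩ h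
  rcases le_or_gt 0 s with hpos | hneg
  · exact key s ⟨hpos, hs.2⟩ h1
  · rw [← Feven β s]
    apply key (-s) ⟨by linarith, by linarith [hs.1]⟩
    intro h
    exact h2 (by linarith [h])

include hβ hm hm_fix hm_unique in
lemma exists_gap {ε : ℝ} (hε : 0 < ε) (hεm : ε < m) :
    ∃ δ > 0, ∀ s : ℝ, s ∈ Icc (-1:ℝ) 1 → ε ≤ |s - m| → ε ≤ |s + m| →
      Ffun β s ≤ Ffun β m - δ := by
  set Kc : Set ℝ := Icc (-1:ℝ) 1 ∩ ({s | ε ≤ |s - m|} ∩ {s | ε ≤ |s + m|}) with hKc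
  have hclosed : IsClosed ({s : ℝ | ε ≤ |s - m|} ∩ {s | ε ≤ |s + m|}) := by
    apply IsClosed.inter
    · exact isClosed_le continuous_const ((continuous_id.sub continuous_const).abs)
    · exact isClosed_le continuous_const ((continuous_id.add continuous_const).abs)
  have hcomp : IsCompact Kc := isCompact_Icc.inter_right hclosed
  have hne : Kc.Nonempty := by
    refine ⟨0, ⟨by constructor <;> norm_num, ?_, ?_⟩⟩
    · simp only [Set.mem_setOf_eq, zero_sub, abs_neg, abs_of_pos hm]; linarith
    · simp only [Set.mem_setOf_eq, zero_add, abs_of_pos hm]; linarith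
  obtain ⟨s0, hs0K, hs0max⟩ := hcomp.exists_isMaxOn hne (Fcont β).continuousOn
  have hs0ne1 : s0 ≠ m := by
    intro h
    have := hs0K.2.1
    rw [h] at this
    simp only [Set.mem_setOf_eq, sub_self, abs_zero] at this
    linarith
  have hs0ne2 : s0 ≠ -m := by
    intro h
    have := hs0K.2.2
    rw [h] at this
    simp only [Set.mem_setOf_eq, neg_add_cancel, abs_zero] at this
    linarith
  have hlt := F_strict_max hβ hm hm_fix hm_unique hs0K.1 hs0ne1 hs0ne2
  refine ⟨Ffun β m - Ffun β s0, by linarith, ?_⟩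
  intro s hsI hs1 hs2
  have hsK : s ∈ Kc := ⟨hsI, hs1, hs2⟩
  have := hs0max hsK
  simp only [Set.mem_setOf_eq] at this
  linarith [this]
end max

lemma tendsto_sq_mul_exp_neg (c : ℝ) (hc : 0 < c) :
    Tendsto (fun n : ℕ => ((n:ℝ)+1)^2 * Real.exp (-(c*(n:ℝ)))) atTop (𝓝 0) := by
  set r : ℝ := Real.exp (-c) with hr
  have hr0 : 0 ≤ r := (Real.exp_pos _).le
  have hr1 : r < 1 := Real.exp_lt_one_iff.2 (by linarith)
  have hexp : ∀ n : ℕ, Real.exp (-(c*(n:ℝ))) = r ^ n := by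
    intro n
    rw [hr, ← Real.exp_nat_mul]
    ring_nf
  have h2 : Tendsto (fun n : ℕ => ((n:ℝ)^2 + 2*(n:ℝ) + 1) * r ^ n) atTop (𝓝 0) := by
    have a1 := tendsto_pow_const_mul_const_pow_of_lt_one 2 hr0 hr1
    have a2 := (tendsto_self_mul_const_pow_of_lt_one hr0 hr1).const_mul 2
    have a3 := tendsto_pow_atTop_nhds_zero_of_lt_one hr0 hr1
    have := (a1.add a2).add a3
    simp only [mul_zero, add_zero] at this
    convert this using 2 with n
    ring
  have : Tendsto (fun n : ℕ => ((n:ℝ)+1)^2 * r ^ n) atTop (𝓝 0) := by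
    convert h2 using 2 with n
    ring
  exact Tendsto.congr (fun n => by rw [hexp n]) this

section Wbounds
open Finset Set

lemma weight_eq_bpmf_mul_exp (β : ℝ) (n k : ℕ) (hn : 0 < n) (hk : k ≤ n) :
    (n.choose k : ℝ) * Real.exp (β/(2*(n:ℝ)) * (2*(k:ℝ)-(n:ℝ))^2)
      = bpmf n k k * Real.exp ((n:ℝ) * Ffun β ((2*(k:ℝ)-(n:ℝ))/(n:ℝ))) := by
  have hn' : (0:ℝ) < n := by exact_mod_cast hn
  have hkn : (k:ℝ) ≤ (n:ℝ) := by exact_mod_cast hk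
  have hps : (1 + (2*(k:ℝ)-(n:ℝ))/(n:ℝ))/2 = (k:ℝ)/(n:ℝ) := by field_simp; ring
  have hqs : (1 - (2*(k:ℝ)-(n:ℝ))/(n:ℝ))/2 = ((n:ℝ)-(k:ℝ))/(n:ℝ) := by field_simp; ring
  have hppow : ((k:ℝ)/(n:ℝ)) ^ k = Real.exp (k * Real.log ((k:ℝ)/(n:ℝ))) := by
    apply pow_eq_exp_log
    rcases Nat.eq_zero_or_pos k with h | h
    · right; exact h
    · left; apply div_pos (by exact_mod_cast h) hn'
  have hqpow : (((n:ℝ)-(k:ℝ))/(n:ℝ)) ^ (n - k)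
      = Real.exp (((n:ℝ)-(k:ℝ)) * Real.log (((n:ℝ)-(k:ℝ))/(n:ℝ))) := by
    have hcast : ((n - k : ℕ) : ℝ) = (n:ℝ) - (k:ℝ) := by rw [Nat.cast_sub hk]
    rw [← hcast]
    apply pow_eq_exp_log
    rcases Nat.lt_or_ge k n with h | h
    · left
      apply div_pos _ hn'
      have : (k:ℝ) < (n:ℝ) := by exact_mod_cast h
      linarith
    · right; omega
  have hF : (n:ℝ) * Ffun β ((2*(k:ℝ)-(n:ℝ))/(n:ℝ))
      = β/(2*(n:ℝ)) * (2*(k:ℝ)-(n:ℝ))^2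
        - ((k:ℝ) * Real.log ((k:ℝ)/(n:ℝ)) + ((n:ℝ)-(k:ℝ)) * Real.log (((n:ℝ)-(k:ℝ))/(n:ℝ))) := by
    rw [Ffun, hps, hqs]
    have h1 : (n:ℝ) * (β * ((2*(k:ℝ)-(n:ℝ))/(n:ℝ))^2/2) = β/(2*(n:ℝ)) * (2*(k:ℝ)-(n:ℝ))^2 := by
      field_simp
    have h2 : (n:ℝ) * ((k:ℝ)/(n:ℝ)) = (k:ℝ) := by field_simp
    have h3 : (n:ℝ) * (((n:ℝ)-(k:ℝ))/(n:ℝ)) = (n:ℝ) - (k:ℝ) := by field_simp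
    calc (n:ℝ) * (β * ((2*(k:ℝ)-(n:ℝ))/(n:ℝ))^2/2
            - ((k:ℝ)/(n:ℝ)) * Real.log ((k:ℝ)/(n:ℝ))
            - (((n:ℝ)-(k:ℝ))/(n:ℝ)) * Real.log (((n:ℝ)-(k:ℝ))/(n:ℝ)))
        = (n:ℝ) * (β * ((2*(k:ℝ)-(n:ℝ))/(n:ℝ))^2/2)
          - ((n:ℝ) * ((k:ℝ)/(n:ℝ))) * Real.log ((k:ℝ)/(n:ℝ))
          - ((n:ℝ) * (((n:ℝ)-(k:ℝ))/(n:ℝ))) * Real.log (((n:ℝ)-(k:ℝ))/(n:ℝ)) := by ring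
      _ = _ := by rw [h1, h2, h3]; ring
  rw [hF]
  unfold bpmf
  rw [hppow, hqpow, Real.exp_sub, Real.exp_add]
  have e1 := Real.exp_pos ((k:ℝ) * Real.log ((k:ℝ)/(n:ℝ)))
  have e2 := Real.exp_pos (((n:ℝ)-(k:ℝ)) * Real.log (((n:ℝ)-(k:ℝ))/(n:ℝ)))
  field_simp

lemma weight_le (β : ℝ) (n k : ℕ) (hn : 0 < n) (hk : k ≤ n) :
    (n.choose k : ℝ) * Real.exp (β/(2*(n:ℝ)) * (2*(k:ℝ)-(n:ℝ))^2)
      ≤ Real.exp ((n:ℝ) * Ffun β ((2*(k:ℝ)-(n:ℝ))/(n:ℝ))) := by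
  rw [weight_eq_bpmf_mul_exp β n k hn hk]
  have h1 := bpmf_le_one n k hn hk k hk
  have h2 := (Real.exp_pos ((n:ℝ) * Ffun β ((2*(k:ℝ)-(n:ℝ))/(n:ℝ)))).le
  nlinarith [bpmf_nonneg n k hk k]

lemma le_weight (β : ℝ) (n k : ℕ) (hn : 0 < n) (hk : k ≤ n) :
    Real.exp ((n:ℝ) * Ffun β ((2*(k:ℝ)-(n:ℝ))/(n:ℝ))) / ((n:ℝ)+1)
      ≤ (n.choose k : ℝ) * Real.exp (β/(2*(n:ℝ)) * (2*(k:ℝ)-(n:ℝ))^2) := by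
  rw [weight_eq_bpmf_mul_exp β n k hn hk]
  have h1 := one_le_bpmf_mode n k hn hk
  have hE := Real.exp_pos ((n:ℝ) * Ffun β ((2*(k:ℝ)-(n:ℝ))/(n:ℝ)))
  rw [div_le_iff₀ (by positivity)]
  nlinarith
end Wbounds

end CWaux


set_option maxHeartbeats 1000000 in
/-- Moment convergence for the magnetization, supercritical case: for `β > 1`,
`E_{β,N}((S_N/N)^K)` converges to `m(β)^K` for even `K` and to `0` for odd `K`, where
`m(β) > 0` is the unique positive solution of `x = tanh (β x)`; these are the moments
of `(1/2)(δ_{−m(β)} + δ_{m(β)})`. -/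
theorem cw_magnetization_moments_supercritical (β : ℝ) (hβ : 1 < β)
    (m : ℝ) (hm : 0 < m) (hm_fix : Real.tanh (β * m) = m)
    (hm_unique : ∀ x : ℝ, 0 < x → Real.tanh (β * x) = x → x = m) (K : ℕ) :
    Tendsto (fun N : ℕ => cwExp β N (fun σ => ((∑ i, spin (σ i)) / N) ^ K))
      atTop (𝓝 (if Even K then m ^ K else 0)) := by
  classical
  by_cases hK : Even K
  case neg =>
    -- odd case: expectation vanishes by the spin-flip symmetry
    rw [if_neg hK]
    have hKodd : Odd K := by simpa using hK
    have hzero : ∀ n : ℕ, cwExp β n (fun σ => ((∑ i, spin (σ i)) / (n:ℝ)) ^ K) = 0 := by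
      intro n
      rw [cwExp]
      have hnum : (∑ σ : Fin n → Bool, cwWeight β n σ * ((∑ i, spin (σ i)) / (n:ℝ)) ^ K) = 0 := by
        set g : (Fin n → Bool) → ℝ :=
          fun σ => cwWeight β n σ * ((∑ i, spin (σ i)) / (n:ℝ)) ^ K with hg
        have hbij : Function.Bijective (fun σ : Fin n → Bool => fun i => !(σ i)) := by
          apply Function.Involutive.bijective
          intro σ; funext i; simp
        have hflip : ∀ σ : Fin n → Bool,
            (∑ i, spin ((fun i => !(σ i)) i)) = -∑ i, spin (σ i) := by
          intro σ
          rw [← Finset.sum_neg_distrib]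
          refine Finset.sum_congr rfl fun i _ => ?_
          show spin (!(σ i)) = -spin (σ i)
          rcases h : σ i with _ | _ <;> simp [spin, h]
        have hptw : ∀ σ : Fin n → Bool, g (fun i => !(σ i)) = -(g σ) := by
          intro σ
          rw [hg]
          simp only
          rw [cwWeight, cwWeight, hflip σ, neg_sq, neg_div, hKodd.neg_pow]
          ring
        have hre : ∑ σ : Fin n → Bool, g σ
            = ∑ σ : Fin n → Bool, g ((fun σ : Fin n → Bool => fun i => !(σ i)) σ) :=
          (Fintype.sum_bijective _ hbij _ _ (fun σ => rfl)).symm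
        have h2 : ∑ σ : Fin n → Bool, g σ = ∑ σ : Fin n → Bool, -(g σ) :=
          hre.trans (Finset.sum_congr rfl fun σ _ => hptw σ)
        rw [Finset.sum_neg_distrib] at h2
        linarith [h2]
      rw [hnum, zero_div]
    simpa [hzero] using tendsto_const_nhds (α := ℝ) (f := atTop (α := ℕ))
  case pos =>
    rw [if_pos hK]
    have hm1 : m < 1 := m_lt_one hβ hm hm_fix
    rw [Metric.tendsto_atTop]
    intro η hη
    -- choose ε for continuity of t ^ K at m
    obtain ⟨ε1, hε1, hball⟩ := Metric.continuousAt_iff.1 ((continuous_pow K).continuousAt (x := m))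
      (η/4) (by linarith)
    set ε : ℝ := min ε1 m / 2 with hεdef
    have hε : 0 < ε := by positivity
    have hεm : ε < m := by
      have : min ε1 m ≤ m := min_le_right _ _
      rw [hεdef]; linarith
    have hεε1 : ε < ε1 := by
      have : min ε1 m ≤ ε1 := min_le_left _ _
      rw [hεdef]; linarith
    obtain ⟨δ, hδ, hgap⟩ := exists_gap hβ hm hm_fix hm_unique hε hεm
    obtain ⟨r, hr, hFball⟩ := Metric.continuousAt_iff.1 (Fcont β).continuousAt (δ/4) (by linarith)
    have hdecay := tendsto_sq_mul_exp_neg (3*δ/4) (by linarith)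
    have hev1 : ∀ᶠ n : ℕ in atTop, ((n:ℝ)+1)^2 * Real.exp (-(3*δ/4*(n:ℝ))) < η/8 :=
      hdecay.eventually (eventually_lt_nhds (by linarith))
    have hev2 : ∀ᶠ n : ℕ in atTop, (2:ℝ)/r ≤ (n:ℝ) :=
      tendsto_natCast_atTop_atTop.eventually_ge_atTop (2/r)
    have hev3 : ∀ᶠ n : ℕ in atTop, 1 ≤ n := eventually_ge_atTop 1
    have hev := (hev1.and (hev2.and hev3))
    rw [eventually_atTop] at hev
    obtain ⟨N₀, hN₀⟩ := hev
    refine ⟨N₀, fun n hn => ?_⟩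
    obtain ⟨hsmall, hnr, hn1⟩ := hN₀ n hn
    -- setup
    have hnR : (0:ℝ) < (n:ℝ) := by exact_mod_cast hn1
    set Fm : ℝ := Ffun β m with hFm
    set wk : ℕ → ℝ := fun k => (n.choose k : ℝ) * Real.exp (β/(2*(n:ℝ)) * (2*(k:ℝ)-(n:ℝ))^2)
      with hwk
    set sk : ℕ → ℝ := fun k => (2*(k:ℝ)-(n:ℝ))/(n:ℝ) with hsk
    have hwk_pos : ∀ k ∈ Finset.range (n+1), 0 < wk k := by
      intro k hk
      rw [Finset.mem_range, Nat.lt_succ_iff] at hk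
      have : 0 < n.choose k := Nat.choose_pos hk
      have : (0:ℝ) < (n.choose k : ℝ) := by exact_mod_cast this
      positivity
    -- rewrite cwExp as ratio of k-sums
    have hZ : cwZ β n = ∑ k ∈ Finset.range (n+1), wk k := by
      rw [cwZ]
      simp only [cwWeight]
      exact sum_fn n (fun x => Real.exp (β/(2*(n:ℝ)) * x^2))
    have hnum : (∑ σ : Fin n → Bool, cwWeight β n σ * ((∑ i, spin (σ i)) / (n:ℝ)) ^ K)
        = ∑ k ∈ Finset.range (n+1), wk k * (sk k)^K := by
      simp only [cwWeight]
      exact (sum_fn n (fun x => Real.exp (β/(2*(n:ℝ)) * x^2) * ((x/(n:ℝ))^K))).trans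
        (Finset.sum_congr rfl fun k _ => by rw [hwk, hsk]; ring)
    set Z : ℝ := ∑ k ∈ Finset.range (n+1), wk k with hZdef
    set A : ℝ := ∑ k ∈ Finset.range (n+1), wk k * (sk k)^K with hAdef
    have hZpos : 0 < Z :=
      Finset.sum_pos hwk_pos ⟨0, Finset.mem_range.2 (Nat.succ_pos n)⟩
    have hsk_mem : ∀ k, k ≤ n → sk k ∈ Set.Icc (-1:ℝ) 1 := by
      intro k hk
      have hkR : (k:ℝ) ≤ (n:ℝ) := by exact_mod_cast hk
      have hk0 : (0:ℝ) ≤ (k:ℝ) := Nat.cast_nonneg k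
      constructor
      · rw [le_div_iff₀ hnR]; linarith
      · rw [div_le_one hnR]; linarith
    -- bad set bound
    set good : ℕ → Prop := fun k => |sk k - m| < ε ∨ |sk k + m| < ε with hgood
    set Bad : ℝ := ∑ k ∈ (Finset.range (n+1)).filter (fun k => ¬ good k), wk k with hBad
    have hbad_sum : Bad ≤ ((n:ℝ)+1) * Real.exp ((n:ℝ)*(Fm-δ)) := by
      have hterm : ∀ k ∈ (Finset.range (n+1)).filter (fun k => ¬ good k),
          wk k ≤ Real.exp ((n:ℝ)*(Fm-δ)) := by
        intro k hk
        rw [Finset.mem_filter, Finset.mem_range, Nat.lt_succ_iff] at hk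
        obtain ⟨hkn, hbadk⟩ := hk
        have hb : ¬ (|sk k - m| < ε ∨ |sk k + m| < ε) := hbadk
        push_neg at hb
        have hF := hgap (sk k) (hsk_mem k hkn) hb.1 hb.2
        calc wk k ≤ Real.exp ((n:ℝ) * Ffun β (sk k)) := weight_le β n k hn1 hkn
          _ ≤ Real.exp ((n:ℝ)*(Fm-δ)) := by
              apply Real.exp_le_exp.2
              apply mul_le_mul_of_nonneg_left hF hnR.le
      calc Bad ≤ ((Finset.range (n+1)).filter (fun k => ¬ good k)).card
            • Real.exp ((n:ℝ)*(Fm-δ)) := Finset.sum_le_card_nsmul _ _ _ hterm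
        _ ≤ ((n:ℝ)+1) * Real.exp ((n:ℝ)*(Fm-δ)) := by
            rw [nsmul_eq_mul]
            apply mul_le_mul_of_nonneg_right _ (Real.exp_pos _).le
            have h1 : ((Finset.range (n+1)).filter (fun k => ¬ good k)).card ≤ n+1 := by
              calc _ ≤ (Finset.range (n+1)).card := Finset.card_filter_le _ _
                _ = n+1 := Finset.card_range _
            calc (((Finset.range (n+1)).filter (fun k => ¬ good k)).card : ℝ)
                ≤ ((n+1 : ℕ) : ℝ) := by exact_mod_cast h1
              _ = (n:ℝ)+1 := by push_cast; ring
    -- lower bound on Z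
    have hZlow : Real.exp ((n:ℝ)*(Fm - δ/4)) / ((n:ℝ)+1) ≤ Z := by
      set kst : ℕ := ⌈(n:ℝ)*(1+m)/2⌉₊ with hkst
      have harg_pos : (0:ℝ) ≤ (n:ℝ)*(1+m)/2 := by positivity
      have h1 : (n:ℝ)*(1+m)/2 ≤ (kst:ℝ) := Nat.le_ceil _
      have h2 : (kst:ℝ) < (n:ℝ)*(1+m)/2 + 1 := Nat.ceil_lt_add_one harg_pos
      have hkst_le : kst ≤ n := by
        rw [hkst, Nat.ceil_le]
        push_cast
        nlinarith
      have hskst_lb : m ≤ sk kst := by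
        rw [hsk]
        simp only
        rw [le_div_iff₀ hnR]
        nlinarith
      have hskst_ub : sk kst - m < 2/(n:ℝ) := by
        rw [hsk]
        simp only
        rw [div_sub' hnR.ne', div_lt_div_iff₀ hnR hnR]
        nlinarith
      have h2n : 2/(n:ℝ) ≤ r := by
        rw [div_le_iff₀ hnR]
        rw [div_le_iff₀ hr] at hnr
        linarith
      have hdist : dist (sk kst) m < r := by
        rw [Real.dist_eq, abs_of_nonneg (by linarith)]
        linarith
      have hFst : Fm - δ/4 ≤ Ffun β (sk kst) := by
        have := hFball hdist
        rw [Real.dist_eq] at this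
        have := abs_lt.1 this
        rw [hFm]
        linarith [this.1]
      calc Real.exp ((n:ℝ)*(Fm - δ/4)) / ((n:ℝ)+1)
          ≤ Real.exp ((n:ℝ) * Ffun β (sk kst)) / ((n:ℝ)+1) := by
            gcongr <;> try exact mul_le_mul_of_nonneg_left hFst hnR.le
        _ ≤ wk kst := le_weight β n kst hn1 hkst_le
        _ ≤ Z := Finset.single_le_sum (fun k hk => (hwk_pos k hk).le)
            (Finset.mem_range.2 (Nat.lt_succ_of_le hkst_le))
    -- ratio bound
    have hBad_nonneg : 0 ≤ Bad :=
      Finset.sum_nonneg fun k hk => (hwk_pos k (Finset.mem_filter.1 hk).1).le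
    have hratio : Bad / Z ≤ η/8 := by
      have hexpprod : Real.exp (-(3*δ/4*(n:ℝ))) * Real.exp ((n:ℝ)*(Fm-δ/4))
          = Real.exp ((n:ℝ)*(Fm-δ)) := by
        rw [← Real.exp_add]; congr 1; ring
      have hX : Bad / Z ≤ ((n:ℝ)+1)^2 * Real.exp (-(3*δ/4*(n:ℝ))) := by
        rw [div_le_iff₀ hZpos]
        calc Bad ≤ ((n:ℝ)+1) * Real.exp ((n:ℝ)*(Fm-δ)) := hbad_sum
          _ = (((n:ℝ)+1)^2 * Real.exp (-(3*δ/4*(n:ℝ))))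
              * (Real.exp ((n:ℝ)*(Fm - δ/4)) / ((n:ℝ)+1)) := by
              rw [show (((n:ℝ)+1)^2 * Real.exp (-(3*δ/4*(n:ℝ))))
                  * (Real.exp ((n:ℝ)*(Fm - δ/4)) / ((n:ℝ)+1))
                  = ((n:ℝ)+1) * (Real.exp (-(3*δ/4*(n:ℝ))) * Real.exp ((n:ℝ)*(Fm-δ/4))) by
                field_simp]
              rw [hexpprod]
          _ ≤ (((n:ℝ)+1)^2 * Real.exp (-(3*δ/4*(n:ℝ)))) * Z := by
              apply mul_le_mul_of_nonneg_left hZlow (by positivity)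
      linarith [hX, hsmall]
    -- good terms are close to the limit
    have hgood_term : ∀ k ∈ (Finset.range (n+1)).filter good, |(sk k)^K - m^K| ≤ η/4 := by
      intro k hk
      rw [Finset.mem_filter, hgood] at hk
      rcases hk.2 with h | h
      · have hd : dist (sk k) m < ε1 := by rw [Real.dist_eq]; exact lt_trans h hεε1
        have := hball hd
        rw [Real.dist_eq] at this
        exact this.le
      · have hd : dist (-sk k) m < ε1 := by
          rw [Real.dist_eq, show -sk k - m = -(sk k + m) by ring, abs_neg]
          exact lt_trans h hεε1
        have := hball hd
        rw [Real.dist_eq, hK.neg_pow] at this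
        exact this.le
    -- final assembly
    have hexp_eq : cwExp β n (fun σ => ((∑ i, spin (σ i)) / (n:ℝ)) ^ K) = A / Z := by
      rw [cwExp, hnum, hZ]
    rw [hexp_eq, Real.dist_eq]
    have hAZ : A/Z - m^K = (A - m^K * Z)/Z := by field_simp
    rw [hAZ, abs_div, abs_of_pos hZpos]
    have hsplit : A - m^K * Z = ∑ k ∈ Finset.range (n+1), wk k * ((sk k)^K - m^K) := by
      rw [hAdef, hZdef, Finset.mul_sum, ← Finset.sum_sub_distrib]
      exact Finset.sum_congr rfl fun k _ => by ring
    have hgoodpart : ∑ k ∈ (Finset.range (n+1)).filter good, wk k * |(sk k)^K - m^K|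
        ≤ (η/4) * Z := by
      calc ∑ k ∈ (Finset.range (n+1)).filter good, wk k * |(sk k)^K - m^K|
          ≤ ∑ k ∈ (Finset.range (n+1)).filter good, wk k * (η/4) := by
            apply Finset.sum_le_sum
            intro k hk
            exact mul_le_mul_of_nonneg_left (hgood_term k hk)
              (hwk_pos k (Finset.mem_filter.1 hk).1).le
        _ = (η/4) * ∑ k ∈ (Finset.range (n+1)).filter good, wk k := by
            rw [Finset.mul_sum]; exact Finset.sum_congr rfl fun k _ => by ring
        _ ≤ (η/4) * Z := by
            apply mul_le_mul_of_nonneg_left _ (by linarith)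
            apply Finset.sum_le_sum_of_subset_of_nonneg (Finset.filter_subset _ _)
            intro k hk _
            exact (hwk_pos k hk).le
    have hbadpart : ∑ k ∈ (Finset.range (n+1)).filter (fun k => ¬ good k),
        wk k * |(sk k)^K - m^K| ≤ 2 * Bad := by
      have h2b : ∀ k ∈ (Finset.range (n+1)).filter (fun k => ¬ good k),
          |(sk k)^K - m^K| ≤ 2 := by
        intro k hk
        have hkn : k ≤ n := by
          have := (Finset.mem_filter.1 hk).1
          rw [Finset.mem_range, Nat.lt_succ_iff] at this
          exact this
        have hmem := hsk_mem k hkn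
        have h1 : |sk k| ≤ 1 := abs_le.2 ⟨hmem.1, hmem.2⟩
        have h2 : |(sk k)^K| ≤ 1 := by
          rw [abs_pow]
          exact pow_le_one₀ (abs_nonneg _) h1
        have h3 : |m^K| ≤ 1 := by
          rw [abs_of_pos (pow_pos hm K)]
          exact pow_le_one₀ hm.le hm1.le
        calc |(sk k)^K - m^K| ≤ |(sk k)^K| + |m^K| := abs_sub _ _
          _ ≤ 2 := by linarith
      calc ∑ k ∈ (Finset.range (n+1)).filter (fun k => ¬ good k), wk k * |(sk k)^K - m^K|
          ≤ ∑ k ∈ (Finset.range (n+1)).filter (fun k => ¬ good k), wk k * 2 := by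
            apply Finset.sum_le_sum
            intro k hk
            exact mul_le_mul_of_nonneg_left (h2b k hk)
              (hwk_pos k (Finset.mem_filter.1 hk).1).le
        _ = 2 * Bad := by
            rw [hBad, Finset.mul_sum]
            exact Finset.sum_congr rfl fun k _ => by ring
    have habs : |A - m^K * Z| ≤ (η/4) * Z + 2 * Bad := by
      rw [hsplit]
      calc |∑ k ∈ Finset.range (n+1), wk k * ((sk k)^K - m^K)|
          ≤ ∑ k ∈ Finset.range (n+1), |wk k * ((sk k)^K - m^K)| :=
            Finset.abs_sum_le_sum_abs _ _
        _ = ∑ k ∈ Finset.range (n+1), wk k * |(sk k)^K - m^K| :=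
            Finset.sum_congr rfl fun k hk => by
              rw [abs_mul, abs_of_pos (hwk_pos k hk)]
        _ = (∑ k ∈ (Finset.range (n+1)).filter good, wk k * |(sk k)^K - m^K|)
            + ∑ k ∈ (Finset.range (n+1)).filter (fun k => ¬ good k),
              wk k * |(sk k)^K - m^K| :=
            (Finset.sum_filter_add_sum_filter_not _ _ _).symm
        _ ≤ (η/4) * Z + 2 * Bad := add_le_add hgoodpart hbadpart
    calc |A - m^K * Z| / Z ≤ ((η/4) * Z + 2 * Bad) / Z := by gcongr
      _ = η/4 + 2*(Bad/Z) := by field_simp; try ring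
      _ ≤ η/4 + 2*(η/8) := by linarith [hratio]
      _ < η := by linarith
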